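/- Suppose x_1' ∈ [0,1) is feasible. Then: (1) every x_1 ∈ [x_1', 1) is feasible; (2) for every such x_1 and every i = 1,…,n, the upward values satisfy x_i(x_1) ∈ [x_i(x_1'), 1) and w_i(x_1) > d_i; (3) on the interval [x_1', 1), each x_i and each w_i is a strictly increasing function of x_1: if x_1' ≤ y < z < 1 then x_i(y) < x_i(z) and w_i(y) < w_i(z) for every i = 1,…,n. -/

import Mathlib

/-- `upP d x1 i = (w_i, w_{i+1})`: the pair of consecutive values reaching nodes
`i` and `i+1`, computed from `x_1 = x1` via the upward equations
`x_{i+1} = 1 − ((1 − x_i)·w_{i−1})/(x_i·w_{i−1} − d_i)`, i.e.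
`w_{i+1} = w_i · (1 − (w_{i−1} − w_i)/(w_i − d_i))` (using `w_i = x_i·w_{i−1}`). -/
noncomputable def upP (d : ℕ → ℝ) (x1 : ℝ) : ℕ → ℝ × ℝ
  | 0 => (d 0, d 0 * x1)
  | i + 1 =>
      let p := upP d x1 i
      (p.2, p.2 * (1 - (p.1 - p.2) / (p.2 - d (i + 1))))

/-- `upW d x1 i = w_i`, the value reaching node `i` under the upward equations
started at `x_1 = x1`. -/
noncomputable def upW (d : ℕ → ℝ) (x1 : ℝ) (i : ℕ) : ℝ :=
  (upP d x1 i).1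

/-- `upX d x1 i = x_i`, the share on edge `e_i` computed from `x_1 = x1` by the
upward equations `x_{i+1} = 1 − ((1 − x_i)·w_{i−1})/(x_i·w_{i−1} − d_i)`
(rewritten as `x_{i+1} = 1 − (w_{i−1} − w_i)/(w_i − d_i)`). -/
noncomputable def upX (d : ℕ → ℝ) (x1 : ℝ) : ℕ → ℝ
  | 0 => 1
  | 1 => x1
  | i + 2 => 1 - (upW d x1 i - upW d x1 (i + 1)) / (upW d x1 (i + 1) - d (i + 1))

/-- `x1` is feasible: `x1 ∈ [0,1]` and the values produced by the upward
equations satisfy `x_i ∈ [0,1]` and `w_i > d_i` for all `i = 1,…,n`. -/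
def Feasible (n : ℕ) (d : ℕ → ℝ) (x1 : ℝ) : Prop :=
  0 ≤ x1 ∧ x1 ≤ 1 ∧
    ∀ i, 1 ≤ i → i ≤ n → (0 ≤ upX d x1 i ∧ upX d x1 i ≤ 1) ∧ d i < upW d x1 i

lemma upW_zero' (d : ℕ → ℝ) (x1 : ℝ) : upW d x1 0 = d 0 := rfl
lemma upW_one' (d : ℕ → ℝ) (x1 : ℝ) : upW d x1 1 = d 0 * x1 := rfl
lemma upW_succ_succ' (d : ℕ → ℝ) (x1 : ℝ) (k : ℕ) :
    upW d x1 (k+2) = upW d x1 (k+1) *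
      (1 - (upW d x1 k - upW d x1 (k+1)) / (upW d x1 (k+1) - d (k+1))) := rfl
lemma upX_one' (d : ℕ → ℝ) (x1 : ℝ) : upX d x1 1 = x1 := rfl
lemma upX_succ_succ' (d : ℕ → ℝ) (x1 : ℝ) (k : ℕ) :
    upX d x1 (k+2) = 1 - (upW d x1 k - upW d x1 (k+1)) / (upW d x1 (k+1) - d (k+1)) := rfl

/-- Pure-real one-step inequalities for the upward recursion. -/
lemma stepIneq (dk wy wz δy δz : ℝ) (hdk : 0 ≤ dk) (h1 : dk < wy) (h2 : wy ≤ wz)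
    (h3 : 0 < δz) (h4 : δz ≤ δy) :
    wy * (1 - δy / (wy - dk)) ≤ wz * (1 - δz / (wz - dk)) ∧
    0 < wz - wz * (1 - δz / (wz - dk)) ∧
    wz - wz * (1 - δz / (wz - dk)) ≤ wy - wy * (1 - δy / (wy - dk)) ∧
    1 - δy / (wy - dk) ≤ 1 - δz / (wz - dk) ∧
    1 - δz / (wz - dk) < 1 ∧
    (δz < δy →
      wy * (1 - δy / (wy - dk)) < wz * (1 - δz / (wz - dk)) ∧
      wz - wz * (1 - δz / (wz - dk)) < wy - wy * (1 - δy / (wy - dk)) ∧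
      1 - δy / (wy - dk) < 1 - δz / (wz - dk)) := by
  have hA : 0 < wy - dk := by linarith
  have hB : 0 < wz - dk := by linarith
  have hwy0 : 0 < wy := by linarith
  have hwz0 : 0 < wz := by linarith
  have hδy0 : 0 < δy := lt_of_lt_of_le h3 h4
  have ewy : wy * (1 - δy / (wy - dk)) = wy - wy * δy / (wy - dk) := by
    field_simp
  have ewz : wz * (1 - δz / (wz - dk)) = wz - wz * δz / (wz - dk) := by
    field_simp
  have gap_le : wz * δz / (wz - dk) ≤ wy * δy / (wy - dk) := by
    rw [div_le_div_iff₀ hB hA]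
    have e1 : 0 ≤ wy * (δy - δz) * (wz - dk) :=
      mul_nonneg (mul_nonneg hwy0.le (by linarith)) hB.le
    have e2 : 0 ≤ dk * δz * (wz - wy) :=
      mul_nonneg (mul_nonneg hdk h3.le) (by linarith)
    nlinarith [e1, e2]
  have gap_pos : 0 < wz * δz / (wz - dk) := div_pos (mul_pos hwz0 h3) hB
  have x_le : δz / (wz - dk) ≤ δy / (wy - dk) := by
    rw [div_le_div_iff₀ hB hA]
    have e3 : 0 ≤ δy * (wz - wy) := mul_nonneg hδy0.le (by linarith)
    have e4 : 0 ≤ (δy - δz) * (wy - dk) := mul_nonneg (by linarith) hA.le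
    nlinarith [e3, e4]
  have x_pos : 0 < δz / (wz - dk) := div_pos h3 hB
  refine ⟨by rw [ewy, ewz]; linarith, by rw [ewz]; linarith,
    by rw [ewy, ewz]; linarith, by linarith, by linarith, ?_⟩
  intro hlt
  have gap_lt : wz * δz / (wz - dk) < wy * δy / (wy - dk) := by
    rw [div_lt_div_iff₀ hB hA]
    have e1 : 0 < wy * (δy - δz) * (wz - dk) :=
      mul_pos (mul_pos hwy0 (by linarith)) hB
    have e2 : 0 ≤ dk * δz * (wz - wy) :=
      mul_nonneg (mul_nonneg hdk h3.le) (by linarith)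
    nlinarith [e1, e2]
  have x_lt : δz / (wz - dk) < δy / (wy - dk) := by
    rw [div_lt_div_iff₀ hB hA]
    have e3 : 0 ≤ δy * (wz - wy) := mul_nonneg hδy0.le (by linarith)
    have e4 : 0 < (δy - δz) * (wy - dk) := mul_pos (by linarith) hA
    nlinarith [e3, e4]
  exact ⟨by rw [ewy, ewz]; linarith, by rw [ewy, ewz]; linarith, by linarith⟩

lemma key_lemma (n : ℕ) (hn : 1 ≤ n) (d : ℕ → ℝ) (hd0 : 0 < d 0)
    (hd : ∀ i, 1 ≤ i → i ≤ n → 0 ≤ d i ∧ d i < d 0)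
    (x1' : ℝ) (hx1'0 : 0 ≤ x1') (hx1'1 : x1' < 1) (hfeas : Feasible n d x1') :
    ∀ k, k + 1 ≤ n → ∀ y z, x1' ≤ y → y ≤ z → z < 1 →
      d (k+1) < upW d y (k+1) ∧
      upW d y (k+1) ≤ upW d z (k+1) ∧
      0 < upW d z k - upW d z (k+1) ∧
      upW d z k - upW d z (k+1) ≤ upW d y k - upW d y (k+1) ∧
      0 ≤ upX d y (k+1) ∧ upX d y (k+1) ≤ upX d z (k+1) ∧ upX d z (k+1) < 1 ∧
      (y < z → upW d y (k+1) < upW d z (k+1) ∧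
        upW d z k - upW d z (k+1) < upW d y k - upW d y (k+1) ∧
        upX d y (k+1) < upX d z (k+1)) := by
  intro k
  induction k with
  | zero =>
    intro _ y z hy hyz hz
    have hy1 : y < 1 := lt_of_le_of_lt hyz hz
    have hfd1 := (hfeas.2.2 1 le_rfl hn).2
    rw [upW_one'] at hfd1
    simp only [zero_add, upW_zero', upW_one', upX_one']
    refine ⟨?_, ?_, ?_, ?_, le_trans hx1'0 hy, hyz, hz, ?_⟩
    · nlinarith
    · nlinarith
    · nlinarith
    · nlinarith
    · intro hlt
      refine ⟨?_, ?_, hlt⟩ <;> nlinarith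
  | succ k ih =>
    intro hkn y z hy hyz hz
    have hkn' : k + 1 ≤ n := by omega
    have hdk : 0 ≤ d (k+1) := (hd (k+1) (by omega) hkn').1
    -- monotonicity facts for any pair, not using feasibility at level k+2
    have main : ∀ y z, x1' ≤ y → y ≤ z → z < 1 →
        upW d y (k+2) ≤ upW d z (k+2) ∧
        0 < upW d z (k+1) - upW d z (k+2) ∧
        upW d z (k+1) - upW d z (k+2) ≤ upW d y (k+1) - upW d y (k+2) ∧
        upX d y (k+2) ≤ upX d z (k+2) ∧ upX d z (k+2) < 1 ∧
        (y < z → upW d y (k+2) < upW d z (k+2) ∧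
          upW d z (k+1) - upW d z (k+2) < upW d y (k+1) - upW d y (k+2) ∧
          upX d y (k+2) < upX d z (k+2)) := by
      intro y z hy hyz hz
      obtain ⟨H1, H2, H3, H4, _, _, _, Hst⟩ := ih hkn' y z hy hyz hz
      obtain ⟨S1, S2, S3, S4, S5, S6⟩ :=
        stepIneq (d (k+1)) (upW d y (k+1)) (upW d z (k+1))
          (upW d y k - upW d y (k+1)) (upW d z k - upW d z (k+1)) hdk H1 H2 H3 H4
      rw [upW_succ_succ' d y k, upW_succ_succ' d z k,
        upX_succ_succ' d y k, upX_succ_succ' d z k]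
      refine ⟨S1, S2, S3, S4, S5, fun hlt => S6 (Hst hlt).2.1⟩
    have hy1 : y < 1 := lt_of_le_of_lt hyz hz
    obtain ⟨M1, M2, M3, M4, M5, M6⟩ := main y z hy hyz hz
    obtain ⟨P1, _, _, P4, _, _⟩ := main x1' y le_rfl hy hy1
    have hfeas2 := hfeas.2.2 (k+2) (by omega) hkn
    exact ⟨lt_of_lt_of_le hfeas2.2 P1, M1, M2, M3, le_trans hfeas2.1.1 P4, M4, M5, M6⟩

/-- If `x1' < 1` is feasible then every `x1 ∈ [x1', 1)` is feasible, the upward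
values satisfy `x_i(x1) ∈ [x_i(x1'), 1)` and `w_i(x1) > d_i`, and on `[x1', 1)`
each `x_i` and `w_i` is a strictly increasing function of `x_1`. -/
theorem upward_values_monotone (n : ℕ) (hn : 1 ≤ n) (d : ℕ → ℝ)
    (hd0 : 0 < d 0) (hd : ∀ i, 1 ≤ i → i ≤ n → 0 ≤ d i ∧ d i < d 0)
    (x1' : ℝ) (hx1'0 : 0 ≤ x1') (hx1'1 : x1' < 1) (hfeas : Feasible n d x1') :
    (∀ x1, x1' ≤ x1 → x1 < 1 →
      Feasible n d x1 ∧
      ∀ i, 1 ≤ i → i ≤ n →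
        (upX d x1' i ≤ upX d x1 i ∧ upX d x1 i < 1) ∧ d i < upW d x1 i) ∧
    (∀ y z, x1' ≤ y → y < z → z < 1 →
      ∀ i, 1 ≤ i → i ≤ n → upX d y i < upX d z i ∧ upW d y i < upW d z i) := by
  have key := key_lemma n hn d hd0 hd x1' hx1'0 hx1'1 hfeas
  constructor
  · intro x1 hx1 hx1lt
    constructor
    · refine ⟨le_trans hx1'0 hx1, hx1lt.le, fun i h1 hi => ?_⟩
      obtain ⟨k, rfl⟩ := Nat.exists_eq_succ_of_ne_zero (by omega : i ≠ 0)
      obtain ⟨Q1, _, _, _, Q5, _, Q7, _⟩ := key k hi x1 x1 hx1 le_rfl hx1lt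
      exact ⟨⟨Q5, Q7.le⟩, Q1⟩
    · intro i h1 hi
      obtain ⟨k, rfl⟩ := Nat.exists_eq_succ_of_ne_zero (by omega : i ≠ 0)
      obtain ⟨Q1, _, _, _, _, Q6, Q7, _⟩ := key k hi x1' x1 le_rfl hx1 hx1lt
      exact ⟨⟨Q6, Q7⟩, lt_of_lt_of_le Q1 (key k hi x1' x1 le_rfl hx1 hx1lt).2.1⟩
  · intro y z hy hyz hz i h1 hi
    obtain ⟨k, rfl⟩ := Nat.exists_eq_succ_of_ne_zero (by omega : i ≠ 0)
    obtain ⟨_, _, _, _, _, _, _, Qst⟩ := key k hi y z hy hyz.le hz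
    obtain ⟨S1, _, S3⟩ := Qst hyz
    exact ⟨S3, S1⟩
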